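/- Let G be a locally colored graph with local coloring c, and let e be an edge with endpoints v and u. Assume (v, c(e,v)) is not a cusp-point, i.e. every edge f ≠ e incident to v satisfies c(f,v) ≠ c(e,v). Then either v belongs to a cusp-free cycle, or for every color α ≠ c(e,v) one has (v,α) ⊳_{(v,e,u)} (u, c(e,u)). -/
import Mathlib


/-- A finite undirected multigraph without loops: each edge is incident to
exactly two distinct endpoints. -/
structure Multigraph (V : Type) (E : Type) where
  inc : E → V → Prop
  exists_two : ∀ e : E, ∃ a b : V, a ≠ b ∧ ∀ w : V, inc e w ↔ (w = a ∨ w = b)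

namespace Multigraph

variable {V E C : Type}

/-- A path (walk) in a multigraph: an alternating sequence of vertices and
edges such that the endpoints of the `i`-th edge are exactly the `i`-th and
`(i+1)`-th vertices. -/
structure Walk (G : Multigraph V E) where
  len : ℕ
  vert : Fin (len + 1) → V
  edge : Fin len → E
  incs : ∀ (i : ℕ) (h : i < len), ∀ w : V,
    G.inc (edge ⟨i, h⟩) w ↔ (w = vert ⟨i, by omega⟩ ∨ w = vert ⟨i + 1, by omega⟩)

variable {G : Multigraph V E}

namespace Walk

/-- The source (first vertex) of a path. -/
def src (p : G.Walk) : V := p.vert ⟨0, by omega⟩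

/-- The target (last vertex) of a path. -/
def tgt (p : G.Walk) : V := p.vert ⟨p.len, by omega⟩

def IsClosed (p : G.Walk) : Prop := p.src = p.tgt

def IsOpen (p : G.Walk) : Prop := p.src ≠ p.tgt

/-- A path is simple when its edges are pairwise distinct and its vertices are
pairwise distinct, except that its two endpoints may coincide. -/
def IsSimple (p : G.Walk) : Prop :=
  (∀ (i j : ℕ) (hi : i < p.len) (hj : j < p.len),
      p.edge ⟨i, hi⟩ = p.edge ⟨j, hj⟩ → i = j) ∧
  (∀ (i j : ℕ) (hi : i < p.len + 1) (hj : j < p.len + 1), i < j →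
      p.vert ⟨i, hi⟩ = p.vert ⟨j, hj⟩ → i = 0 ∧ j = p.len)

/-- A cycle is a non-empty simple closed path. -/
def IsCycle (p : G.Walk) : Prop := p.IsSimple ∧ p.IsClosed ∧ 0 < p.len

/-- `x` occurs as a vertex of `p`. -/
def MemV (p : G.Walk) (x : V) : Prop := ∃ (i : ℕ) (h : i < p.len + 1), p.vert ⟨i, h⟩ = x

/-- `e` occurs as an edge of `p`. -/
def MemE (p : G.Walk) (e : E) : Prop := ∃ (i : ℕ) (h : i < p.len), p.edge ⟨i, h⟩ = e

/-- With respect to a local coloring `c`, the path `p` has a cusp at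
vertex-position `j`, at vertex `u`, with color `α`: either an internal cusp
(two consecutive distinct edges with the same color at their middle vertex),
or -- when `j = 0` and `p` is closed -- the cusp formed by its last edge, its
source and its first edge. -/
def CuspAt (c : E → V → C) (p : G.Walk) (j : ℕ) (u : V) (α : C) : Prop :=
  (∃ (h1 : 0 < j) (h2 : j < p.len),
      p.vert ⟨j, by omega⟩ = u ∧
      p.edge ⟨j - 1, by omega⟩ ≠ p.edge ⟨j, h2⟩ ∧
      c (p.edge ⟨j - 1, by omega⟩) u = α ∧ c (p.edge ⟨j, h2⟩) u = α) ∨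
  (j = 0 ∧ p.IsClosed ∧ p.src = u ∧
    ∃ h : 0 < p.len,
      p.edge ⟨p.len - 1, by omega⟩ ≠ p.edge ⟨0, h⟩ ∧
      c (p.edge ⟨p.len - 1, by omega⟩) u = α ∧ c (p.edge ⟨0, h⟩) u = α)

/-- `p` has a cusp at vertex-position `j`. -/
def CuspIdx (c : E → V → C) (p : G.Walk) (j : ℕ) : Prop := ∃ u α, p.CuspAt c j u α

/-- `p` has a cusp whose vertex is `u`. -/
def HasCuspAtV (c : E → V → C) (p : G.Walk) (u : V) : Prop := ∃ j α, p.CuspAt c j u α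

/-- A cusp-free (alternating) path. -/
def CuspFree (c : E → V → C) (p : G.Walk) : Prop := ∀ j : ℕ, ¬ p.CuspIdx c j

/-- The number of cusps of a path. -/
noncomputable def cuspCount (c : E → V → C) (p : G.Walk) : ℕ :=
  {j : ℕ | p.CuspIdx c j}.ncard

/-- The starting color of `p` is not `α`. -/
def StartColorNe (c : E → V → C) (p : G.Walk) (α : C) : Prop :=
  ∀ h : 0 < p.len, c (p.edge ⟨0, h⟩) p.src ≠ α

/-- `p` is non-empty and its ending color is `β`. -/
def EndColorIs (c : E → V → C) (p : G.Walk) (β : C) : Prop :=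
  ∃ h : 0 < p.len, c (p.edge ⟨p.len - 1, by omega⟩) p.tgt = β

/-- `q` is a (contiguous) sub-path of `p`. -/
def IsSubpathOf (q p : G.Walk) : Prop :=
  ∃ (k : ℕ) (hk : k + q.len ≤ p.len),
    (∀ (i : ℕ) (hi : i < q.len + 1), q.vert ⟨i, hi⟩ = p.vert ⟨k + i, by omega⟩) ∧
    (∀ (i : ℕ) (hi : i < q.len), q.edge ⟨i, hi⟩ = p.edge ⟨k + i, by omega⟩)

/-- `r` is the path `p` extended (at its end) by the edge `e` to the vertex `l`;
that is, `r = p · (tgt p, e, l)`. -/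
def ExtendsBy (r p : G.Walk) (e : E) (l : V) : Prop :=
  ∃ hlen : r.len = p.len + 1,
    (∀ (i : ℕ) (hi : i < p.len + 1), r.vert ⟨i, by omega⟩ = p.vert ⟨i, hi⟩) ∧
    (∀ (i : ℕ) (hi : i < p.len), r.edge ⟨i, by omega⟩ = p.edge ⟨i, hi⟩) ∧
    r.edge ⟨p.len, by omega⟩ = e ∧ r.vert ⟨p.len + 1, by omega⟩ = l

/-- `r` is the path obtained by prefixing `p` with the edge `e`;
that is, `r = (src r, e, src p) · p`. -/
def ConsOf (r : G.Walk) (e : E) (p : G.Walk) : Prop :=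
  ∃ hlen : r.len = p.len + 1,
    r.edge ⟨0, by omega⟩ = e ∧
    (∀ (i : ℕ) (hi : i < p.len + 1), r.vert ⟨i + 1, by omega⟩ = p.vert ⟨i, hi⟩) ∧
    (∀ (i : ℕ) (hi : i < p.len), r.edge ⟨i + 1, by omega⟩ = p.edge ⟨i, hi⟩)

end Walk

/-- `(v, α)` is a cusp-point: two distinct edges incident to `v` both have
color `α` at `v`. -/
def IsCuspPoint (G : Multigraph V E) (c : E → V → C) (v : V) (α : C) : Prop :=
  ∃ e f : E, e ≠ f ∧ G.inc e v ∧ G.inc f v ∧ c e v = α ∧ c f v = α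

/-- `(v, α) ⇝_p (u, β)`: `p` is a simple open cusp-free path from `v` to `u`
whose starting color is not `α` and whose ending color is `β`. -/
def StepsTo (G : Multigraph V E) (c : E → V → C) (v : V) (α : C) (u : V) (β : C)
    (p : G.Walk) : Prop :=
  p.IsSimple ∧ p.IsOpen ∧ p.CuspFree c ∧ p.src = v ∧ p.tgt = u ∧
    p.StartColorNe c α ∧ p.EndColorIs c β

/-- `(v, α) ⇝ (u, β)`. -/
def Steps (G : Multigraph V E) (c : E → V → C) (v : V) (α : C) (u : V) (β : C) : Prop :=
  ∃ p : G.Walk, G.StepsTo c v α u β p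

/-- `(v, α) ⊳_p (u, β)`: `(v, α) ⇝_p (u, β)` and no `⇝`-path from `(u, β)`
ends on a vertex of `p`. -/
def TriPath (G : Multigraph V E) (c : E → V → C) (v : V) (α : C) (u : V) (β : C)
    (p : G.Walk) : Prop :=
  G.StepsTo c v α u β p ∧
    ∀ (x : V) (τ : C) (q : G.Walk), G.StepsTo c u β x τ q → ¬ p.MemV x

/-- `(v, α) ⊳ (u, β)`. -/
def Tri (G : Multigraph V E) (c : E → V → C) (v : V) (α : C) (u : V) (β : C) : Prop :=
  ∃ p : G.Walk, G.TriPath c v α u β p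

/-- A splitting vertex: every cycle containing `v` has a cusp at `v`. -/
def IsSplitting (G : Multigraph V E) (c : E → V → C) (v : V) : Prop :=
  ∀ ω : G.Walk, ω.IsCycle → ω.MemV v → ω.HasCuspAtV c v

/-- A set `P` of vertex-color pairs dominates cusp-points. -/
def Dominates (G : Multigraph V E) (c : E → V → C) (P : Set (V × C)) : Prop :=
  ∀ (v : V) (α : C), G.IsCuspPoint c v α →
    (v, α) ∈ P ∨ ∃ (u : V) (β : C), (u, β) ∈ P ∧ G.Tri c v α u β

/-- `𝔐(v)`: the set of cycles with source `v`, whose last and first edges do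
not make a cusp at `v`, with a minimal number of cusps among such cycles. -/
def MinCycles (G : Multigraph V E) (c : E → V → C) (v : V) : Set G.Walk :=
  {ω | ω.IsCycle ∧ ω.src = v ∧ ¬ ω.CuspIdx c 0 ∧
    ∀ ω' : G.Walk, ω'.IsCycle → ω'.src = v → ¬ ω'.CuspIdx c 0 →
      ω.cuspCount c ≤ ω'.cuspCount c}

/-- The one-edge path `(v, e, u)`. -/
def singleWalk (G : Multigraph V E) (e : E) (v u : V)
    (hends : ∀ w : V, G.inc e w ↔ w = v ∨ w = u) : G.Walk where
  len := 1
  vert := fun i => if (i : ℕ) = 0 then v else u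
  edge := fun _ => e
  incs := by
    intro i h w
    have hi : i = 0 := by omega
    subst hi
    simpa using hends w

/-- An alternating cycle with respect to an edge-coloring: a cycle whose
consecutive edges (including last and first) have different colors. -/
def Walk.IsAlternatingCycle (c : E → C) (p : G.Walk) : Prop :=
  p.IsCycle ∧
  (∀ (i : ℕ) (h : i + 1 < p.len), c (p.edge ⟨i, by omega⟩) ≠ c (p.edge ⟨i + 1, h⟩)) ∧
  (∀ h : 0 < p.len, c (p.edge ⟨p.len - 1, by omega⟩) ≠ c (p.edge ⟨0, h⟩))

/-- `a` and `b` are connected in `G − v` (by a path avoiding `v`). -/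
def ReachAvoiding (G : Multigraph V E) (v a b : V) : Prop :=
  ∃ p : G.Walk, p.src = a ∧ p.tgt = b ∧
    ∀ (i : ℕ) (h : i < p.len + 1), p.vert ⟨i, h⟩ ≠ v

/-- A perfect matching: every vertex is incident to exactly one edge of `F`. -/
def IsPerfectMatching (G : Multigraph V E) (F : Set E) : Prop :=
  ∀ v : V, ∃! e : E, e ∈ F ∧ G.inc e v

/-- A bridge: an edge contained in no cycle. -/
def IsBridge (G : Multigraph V E) (e : E) : Prop :=
  ¬ ∃ ω : G.Walk, ω.IsCycle ∧ ω.MemE e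

/-- A `φ`-conformal cycle: a cycle `ω` such that `φ x` is an edge of `ω`
for every vertex `x` of `ω`. -/
def ConformalCycle (G : Multigraph V E) (φ : V → E) (ω : G.Walk) : Prop :=
  ω.IsCycle ∧ ∀ x : V, ω.MemV x → ω.MemE (φ x)

/-- A sub-graph: sets of vertices and edges, each edge having its endpoints
among the vertices. -/
structure Subgraph (G : Multigraph V E) where
  verts : Set V
  edges : Set E
  edge_mem : ∀ e ∈ edges, ∀ w : V, G.inc e w → w ∈ verts

/-- The walk `p` lies inside the sub-graph `S`. -/
def Walk.InSub (p : G.Walk) (S : G.Subgraph) : Prop :=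
  (∀ (i : ℕ) (h : i < p.len + 1), p.vert ⟨i, h⟩ ∈ S.verts) ∧
  (∀ (i : ℕ) (h : i < p.len), p.edge ⟨i, h⟩ ∈ S.edges)

/-- `S` is `⇝`-connected: any two distinct vertices of `S` are related by `⇝`
along a path inside `S`, for any starting color constraint. -/
def Subgraph.StepConnected (c : E → V → C) (S : G.Subgraph) : Prop :=
  ∀ v ∈ S.verts, ∀ u ∈ S.verts, v ≠ u → ∀ α : C,
    ∃ (p : G.Walk) (β : C), p.InSub S ∧ G.StepsTo c v α u β p

/-- `S` is connected: non-empty, and any two of its vertices are joined by a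
path lying inside it. -/
def Subgraph.IsConnected (S : G.Subgraph) : Prop :=
  (S.verts.Nonempty ∨ S.edges.Nonempty) ∧
  ∀ a ∈ S.verts, ∀ b ∈ S.verts,
    ∃ p : G.Walk, p.InSub S ∧ p.src = a ∧ p.tgt = b

/-- The sub-graph consisting of the vertices and edges of a walk. -/
def Walk.toSub (p : G.Walk) : G.Subgraph where
  verts := {x | p.MemV x}
  edges := {e | p.MemE e}
  edge_mem := by
    rintro e ⟨i, h, rfl⟩ w hw
    rw [p.incs i h w] at hw
    rcases hw with h' | h'
    · exact ⟨i, by omega, h'.symm⟩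
    · exact ⟨i + 1, by omega, h'.symm⟩

/-- Union of sub-graphs. -/
def Subgraph.union (S R : G.Subgraph) : G.Subgraph where
  verts := S.verts ∪ R.verts
  edges := S.edges ∪ R.edges
  edge_mem := by
    rintro e (he | he) w hw
    · exact Or.inl (S.edge_mem e he w hw)
    · exact Or.inr (R.edge_mem e he w hw)

/-- Inclusion of sub-graphs. -/
def Subgraph.le (S T : G.Subgraph) : Prop := S.verts ⊆ T.verts ∧ S.edges ⊆ T.edges

/-- `S` is a union of cusp-free cycles. -/
def IsCuspFreeCycleUnion (G : Multigraph V E) (c : E → V → C) (S : G.Subgraph) : Prop :=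
  ∃ F : Set G.Walk, (∀ ω ∈ F, Walk.IsCycle ω ∧ Walk.CuspFree c ω) ∧
    S.verts = {x | ∃ ω ∈ F, Walk.MemV ω x} ∧
    S.edges = {e | ∃ ω ∈ F, Walk.MemE ω e}

/-- `𝕺`: the set of maximal connected unions of cusp-free cycles. -/
def MaxCFCU (G : Multigraph V E) (c : E → V → C) : Set (G.Subgraph) :=
  {S | G.IsCuspFreeCycleUnion c S ∧ S.IsConnected ∧
    ∀ T : G.Subgraph, G.IsCuspFreeCycleUnion c T → T.IsConnected → S.le T → T.le S}

end Multigraph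

/-- A finite directed loopless multigraph. -/
structure DirMultigraph (V : Type) (E : Type) where
  srcE : E → V
  tgtE : E → V
  ne : ∀ e : E, srcE e ≠ tgtE e

/-- The underlying undirected multigraph of a directed multigraph. -/
def DirMultigraph.toMultigraph {V E : Type} (D : DirMultigraph V E) : Multigraph V E where
  inc e w := w = D.srcE e ∨ w = D.tgtE e
  exists_two e := ⟨D.srcE e, D.tgtE e, D.ne e, fun _ => Iff.rfl⟩

/-- `v` is a turning vertex of the cycle `ω`: the two edges incident to `v`
in `ω` either both have source `v` or both have target `v`. -/
def DirMultigraph.TurningAt {V E : Type} (D : DirMultigraph V E)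
    (ω : D.toMultigraph.Walk) (v : V) : Prop :=
  (∃ (j : ℕ) (h1 : 0 < j) (h2 : j < ω.len),
      ω.vert ⟨j, by omega⟩ = v ∧
      ((D.srcE (ω.edge ⟨j - 1, by omega⟩) = v ∧ D.srcE (ω.edge ⟨j, h2⟩) = v) ∨
       (D.tgtE (ω.edge ⟨j - 1, by omega⟩) = v ∧ D.tgtE (ω.edge ⟨j, h2⟩) = v))) ∨
  (Multigraph.Walk.IsClosed ω ∧ Multigraph.Walk.src ω = v ∧
    ∃ h : 0 < ω.len,
      ((D.srcE (ω.edge ⟨ω.len - 1, by omega⟩) = v ∧ D.srcE (ω.edge ⟨0, h⟩) = v) ∨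
       (D.tgtE (ω.edge ⟨ω.len - 1, by omega⟩) = v ∧ D.tgtE (ω.edge ⟨0, h⟩) = v)))

namespace Multigraph

section Aux

variable {V E C : Type} {G : Multigraph V E}

/-- Extension of a walk by one edge at the end. -/
def Walk.ext (q : G.Walk) (e : E) (u : V)
    (hinc : ∀ w, G.inc e w ↔ w = q.tgt ∨ w = u) : G.Walk where
  len := q.len + 1
  vert := fun i => if h : (i : ℕ) < q.len + 1 then q.vert ⟨i, h⟩ else u
  edge := fun i => if h : (i : ℕ) < q.len then q.edge ⟨i, h⟩ else e
  incs := by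
    intro i h w
    by_cases hi : i < q.len
    · simp only [dif_pos hi, dif_pos (show i < q.len + 1 by omega),
        dif_pos (show i + 1 < q.len + 1 by omega)]
      exact q.incs i hi w
    · have hieq : i = q.len := by omega
      subst hieq
      simp only [dif_neg (lt_irrefl q.len), dif_pos (show q.len < q.len + 1 by omega),
        dif_neg (show ¬ q.len + 1 < q.len + 1 by omega)]
      exact hinc w

theorem Walk.ext_len (q : G.Walk) (e : E) (u : V)
    (hinc : ∀ w, G.inc e w ↔ w = q.tgt ∨ w = u) :
    (q.ext e u hinc).len = q.len + 1 := rfl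

theorem Walk.ext_vert (q : G.Walk) (e : E) (u : V)
    (hinc : ∀ w, G.inc e w ↔ w = q.tgt ∨ w = u) (i : ℕ) (h : i < q.len + 1)
    (h2 : i < (q.ext e u hinc).len + 1) :
    (q.ext e u hinc).vert ⟨i, h2⟩ = q.vert ⟨i, h⟩ := dif_pos h

theorem Walk.ext_vert_last (q : G.Walk) (e : E) (u : V)
    (hinc : ∀ w, G.inc e w ↔ w = q.tgt ∨ w = u)
    (h2 : q.len + 1 < (q.ext e u hinc).len + 1) :
    (q.ext e u hinc).vert ⟨q.len + 1, h2⟩ = u :=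
  dif_neg (show ¬ q.len + 1 < q.len + 1 by omega)

theorem Walk.ext_edge (q : G.Walk) (e : E) (u : V)
    (hinc : ∀ w, G.inc e w ↔ w = q.tgt ∨ w = u) (i : ℕ) (h : i < q.len)
    (h2 : i < (q.ext e u hinc).len) :
    (q.ext e u hinc).edge ⟨i, h2⟩ = q.edge ⟨i, h⟩ := dif_pos h

theorem Walk.ext_edge_last (q : G.Walk) (e : E) (u : V)
    (hinc : ∀ w, G.inc e w ↔ w = q.tgt ∨ w = u)
    (h2 : q.len < (q.ext e u hinc).len) :
    (q.ext e u hinc).edge ⟨q.len, h2⟩ = e :=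
  dif_neg (show ¬ q.len < q.len by omega)

/-- Closing a simple open cusp-free path from `u` to `v` with the edge `e`
gives a cusp-free cycle through `v`. -/
theorem cycle_of_back_path (c : E → V → C) (e : E) (v u : V) (τ : C)
    (hends : ∀ w : V, G.inc e w ↔ w = v ∨ w = u)
    (hnc : ¬ G.IsCuspPoint c v (c e v))
    (q : G.Walk) (hq : G.StepsTo c u (c e u) v τ q) :
    ∃ δ : G.Walk, δ.IsCycle ∧ δ.CuspFree c ∧ δ.MemV v := by
  obtain ⟨hsimp, hopen, hcf, hsrc, htgt, hstart, hend⟩ := hq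
  obtain ⟨hn, -⟩ := hend
  -- distinct vertices
  have hvd : ∀ (i j : ℕ) (hi : i < q.len + 1) (hj : j < q.len + 1), i < j →
      q.vert ⟨i, hi⟩ ≠ q.vert ⟨j, hj⟩ := by
    intro i j hi hj hij heq
    obtain ⟨h0, hjn⟩ := hsimp.2 i j hi hj hij heq
    subst h0; subst hjn
    exact hopen heq
  have hu0 : ∀ (i : ℕ) (hi : i < q.len + 1), q.vert ⟨i, hi⟩ = u → i = 0 := by
    intro i hi h
    by_contra h0
    exact hvd 0 i (by omega) hi (by omega) (hsrc.trans h.symm)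
  have hvn : ∀ (i : ℕ) (hi : i < q.len + 1), q.vert ⟨i, hi⟩ = v → i = q.len := by
    intro i hi h
    by_contra h0
    exact hvd i q.len hi (by omega) (by omega) (h.trans htgt.symm)
  -- e does not occur in q
  have hA : ∀ (i : ℕ) (hi : i < q.len), q.edge ⟨i, hi⟩ ≠ e := by
    intro i hi heq
    have hiff : ∀ w : V, (w = v ∨ w = u) ↔
        (w = q.vert ⟨i, by omega⟩ ∨ w = q.vert ⟨i + 1, by omega⟩) := by
      intro w
      rw [← hends w, ← heq]
      exact q.incs i hi w
    have h1 : q.vert ⟨i, by omega⟩ = v ∨ q.vert ⟨i, by omega⟩ = u :=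
      (hiff _).mpr (Or.inl rfl)
    rcases h1 with h1 | h1
    · have := hvn i (by omega) h1; omega
    · have hi0 : i = 0 := hu0 i (by omega) h1
      subst hi0
      have h2 : q.vert ⟨1, by omega⟩ = v ∨ q.vert ⟨1, by omega⟩ = u :=
        (hiff _).mpr (Or.inr rfl)
      rcases h2 with h2 | h2
      · have h1n : 1 = q.len := hvn 1 (by omega) h2
        apply hstart hn
        rw [hsrc, heq]
      · have := hu0 1 (by omega) h2; omega
  -- the last edge of q does not have color c e v at v
  have hC : c (q.edge ⟨q.len - 1, by omega⟩) v ≠ c e v := by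
    intro heq
    apply hnc
    refine ⟨q.edge ⟨q.len - 1, by omega⟩, e, hA _ _, ?_,
      (hends v).mpr (Or.inl rfl), heq, rfl⟩
    rw [q.incs (q.len - 1) (by omega) v]
    right
    have hfin : (⟨q.len - 1 + 1, by omega⟩ : Fin (q.len + 1)) = ⟨q.len, by omega⟩ := by
      ext; simp; omega
    rw [hfin]
    exact htgt.symm
  have hinc : ∀ w, G.inc e w ↔ w = q.tgt ∨ w = u := by
    intro w; rw [hends w, htgt]
  have hL : (q.ext e u hinc).len = q.len + 1 := rfl
  refine ⟨q.ext e u hinc, ⟨⟨?_, ?_⟩, ?_, by omega⟩, ?_, ?_⟩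
  · -- edges pairwise distinct
    intro i j hi hj heq
    by_cases hi' : i < q.len <;> by_cases hj' : j < q.len
    · rw [Walk.ext_edge q e u hinc i hi', Walk.ext_edge q e u hinc j hj'] at heq
      exact hsimp.1 i j hi' hj' heq
    · have hjq : j = q.len := by omega
      subst hjq
      rw [Walk.ext_edge q e u hinc i hi', Walk.ext_edge_last] at heq
      exact absurd heq (hA i hi')
    · have hiq : i = q.len := by omega
      subst hiq
      rw [Walk.ext_edge q e u hinc j hj', Walk.ext_edge_last] at heq
      exact absurd heq.symm (hA j hj')
    · omega
  · -- vertices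
    intro i j hi hj hij heq
    by_cases hj' : j < q.len + 1
    · rw [Walk.ext_vert q e u hinc i (by omega), Walk.ext_vert q e u hinc j hj'] at heq
      exact absurd heq (hvd i j (by omega) hj' hij)
    · have hjn : j = q.len + 1 := by omega
      subst hjn
      rw [Walk.ext_vert q e u hinc i (by omega), Walk.ext_vert_last] at heq
      exact ⟨hu0 i (by omega) heq, by omega⟩
  · -- closed
    show (q.ext e u hinc).vert ⟨0, by omega⟩ = (q.ext e u hinc).vert ⟨q.len + 1, by omega⟩
    rw [Walk.ext_vert q e u hinc 0 (by omega), Walk.ext_vert_last]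
    exact hsrc
  · -- cusp-free
    intro j ⟨w, β, hca⟩
    rcases hca with ⟨h1, h2, hw, hne, hc1, hc2⟩ | ⟨hj0, hcl, hsw, hl, hne, hc1, hc2⟩
    · by_cases hj' : j < q.len
      · -- internal cusp of q
        apply hcf j
        refine ⟨w, β, Or.inl ⟨h1, hj', ?_, ?_, ?_, ?_⟩⟩
        · rw [← Walk.ext_vert q e u hinc j (by omega) (by omega)]; exact hw
        · rw [← Walk.ext_edge q e u hinc (j-1) (by omega) (by omega),
            ← Walk.ext_edge q e u hinc j hj' (by omega)]
          exact hne
        · rw [← Walk.ext_edge q e u hinc (j-1) (by omega) (by omega)]; exact hc1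
        · rw [← Walk.ext_edge q e u hinc j hj' (by omega)]; exact hc2
      · have hjn : j = q.len := by omega
        subst hjn
        rw [Walk.ext_vert q e u hinc q.len (by omega)] at hw
        have hwv : v = w := by rw [← hw]; exact htgt.symm
        rw [← hwv] at hc1 hc2
        rw [Walk.ext_edge q e u hinc (q.len - 1) (by omega)] at hc1
        rw [Walk.ext_edge_last] at hc2
        exact hC (hc1.trans hc2.symm)
    · -- closing cusp
      have hsu : u = w := by
        rw [← hsw]
        show u = (q.ext e u hinc).vert ⟨0, by omega⟩
        rw [Walk.ext_vert q e u hinc 0 (by omega)]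
        exact hsrc.symm
      rw [← hsu] at hc1 hc2
      have hlast : (q.ext e u hinc).edge ⟨(q.ext e u hinc).len - 1, by omega⟩ = e :=
        Walk.ext_edge_last q e u hinc (by omega)
      rw [hlast] at hc1
      rw [Walk.ext_edge q e u hinc 0 hn] at hc2
      apply hstart hn
      rw [hsrc, hc2, ← hc1]
  · -- v is a vertex
    refine ⟨q.len, by omega, ?_⟩
    rw [Walk.ext_vert q e u hinc q.len (by omega)]
    exact htgt

end Aux

end Multigraph


open Multigraph in
/-- Either `v` lies on a cusp-free cycle, or `(v, α) ⊳_{(v,e,u)} (u, c(e,u))`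
for every color `α ≠ c(e,v)`. -/
theorem terminality
    {V E C : Type} [Fintype V] [Fintype E] [Fintype C]
    (G : Multigraph V E) (c : E → V → C)
    (e : E) (v u : V) (hvu : v ≠ u)
    (hends : ∀ w : V, G.inc e w ↔ w = v ∨ w = u)
    (hnc : ¬ G.IsCuspPoint c v (c e v)) :
    (∃ δ : G.Walk, δ.IsCycle ∧ δ.CuspFree c ∧ δ.MemV v) ∨
    (∀ α : C, α ≠ c e v →
      G.TriPath c v α u (c e u) (G.singleWalk e v u hends)) := by
  
  by_cases hcyc : ∃ δ : G.Walk, δ.IsCycle ∧ δ.CuspFree c ∧ δ.MemV v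
  · exact Or.inl hcyc
  · right
    intro α hα
    have hL : (G.singleWalk e v u hends).len = 1 := rfl
    constructor
    · refine ⟨⟨fun i j hi hj _ => by omega,
        fun i j hi hj hij heq => ⟨by omega, by omega⟩⟩, ?_, ?_, rfl, rfl, ?_, ?_⟩
      · exact hvu
      · intro j ⟨w, β, hca⟩
        rcases hca with ⟨h1, h2, -⟩ | ⟨-, hcl, -⟩
        · omega
        · exact hvu hcl
      · intro h heq
        exact hα heq.symm
      · exact ⟨by omega, rfl⟩
    · intro x τ q hq hmem
      obtain ⟨i, hi, hix⟩ := hmem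
      have hxvu : x = v ∨ x = u := by
        by_cases hi0 : i = 0
        · subst hi0
          left; rw [← hix]; rfl
        · have hi1 : i = 1 := by omega
          subst hi1
          right; rw [← hix]; rfl
      have hqsrc : q.src = u := hq.2.2.2.1
      have hqtgt : q.tgt = x := hq.2.2.2.2.1
      rcases hxvu with rfl | rfl
      · exact hcyc (G.cycle_of_back_path c e x u τ hends hnc q hq)
      · exact hq.2.1 (hqsrc.trans hqtgt.symm)
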